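/- Let 0 < d < 1/4 and ψ_l ≤ C l^{d-1} for l ≥ 1, ψ_0 ≤ C. Then for N ≥ 2, the sum over l, m, n, o ≥ 0 with |l-m| ≥ N, |n-o| ≥ N and l - m + n - o = 0 of ψ_l ψ_m ψ_n ψ_o is bounded by C' N^{4d-1} for a constant C' depending only on C and d. -/

import Mathlib

open Real

/-- Pointwise Bernoulli-type inequality for negative exponents:
`q * (x+1)^(-q-1) ≤ x^(-q) - (x+1)^(-q)`. -/
private lemma bern_neg {q x : ℝ} (hq : 0 < q) (hx : 1 ≤ x) :
    q * (x + 1) ^ (-q - 1) ≤ x ^ (-q) - (x + 1) ^ (-q) := by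
  have hx0 : (0:ℝ) < x := lt_of_lt_of_le one_pos hx
  have hx1 : (0:ℝ) < x + 1 := by linarith
  have hX : (0:ℝ) < x ^ q := Real.rpow_pos_of_pos hx0 q
  have hY : (0:ℝ) < (x + 1) ^ q := Real.rpow_pos_of_pos hx1 q
  have hs : (-1 : ℝ) ≤ 1 / x := by
    have : (0:ℝ) ≤ 1 / x := by positivity
    linarith
  have hb := one_add_mul_self_le_rpow_one_add hs (p := q + 1) (by linarith)
  have h1 : (1 : ℝ) + 1 / x = (x + 1) / x := by field_simp
  have h2 : ((x + 1) / x) ^ (q + 1) = ((x + 1) ^ q * (x + 1)) / (x ^ q * x) := by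
    rw [Real.div_rpow (by linarith) hx0.le, Real.rpow_add hx1, Real.rpow_add hx0,
      Real.rpow_one, Real.rpow_one]
  rw [h1, h2] at hb
  have key : (1 + (q + 1) * (1 / x)) * (x ^ q * x) ≤ (x + 1) ^ q * (x + 1) :=
    (le_div_iff₀ (by positivity)).mp hb
  have key' : x ^ q * (x + (q + 1)) ≤ (x + 1) ^ q * (x + 1) := by
    have hxne : x ≠ 0 := ne_of_gt hx0
    calc x ^ q * (x + (q + 1)) = (1 + (q + 1) * (1 / x)) * (x ^ q * x) := by
          field_simp
      _ ≤ _ := key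
  have ha : x ^ (-q) = (x ^ q)⁻¹ := Real.rpow_neg hx0.le q
  have hb' : (x + 1) ^ (-q) = ((x + 1) ^ q)⁻¹ := Real.rpow_neg hx1.le q
  have hc : (x + 1) ^ (-q - 1) = ((x + 1) ^ q * (x + 1))⁻¹ := by
    rw [show -q - 1 = -(q + 1) by ring, Real.rpow_neg hx1.le, Real.rpow_add hx1, Real.rpow_one]
  rw [ha, hb', hc, ← sub_nonneg]
  have e : (x ^ q)⁻¹ - ((x + 1) ^ q)⁻¹ - q * ((x + 1) ^ q * (x + 1))⁻¹
      = ((x + 1) ^ q * (x + 1) - x ^ q * (x + (q + 1))) / (x ^ q * ((x + 1) ^ q * (x + 1))) := by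
    field_simp
    ring
  rw [e]
  exact div_nonneg (by linarith) (by positivity)

/-- Tail estimate: `∑_{j≥0} (j+M)^a ≤ (1 + 1/(-(a+1))) M^(a+1)` for `a < -1`, `M ≥ 1`. -/
private lemma tail_sum {a : ℝ} (ha : a < -1) {M : ℕ} (hM : 1 ≤ M) :
    ∑' j : ℕ, ((j + M : ℕ) : ℝ) ^ a ≤ (1 + 1 / (-(a + 1))) * (M : ℝ) ^ (a + 1) := by
  have hq : 0 < -(a + 1) := by linarith
  have hM0 : (1:ℝ) ≤ (M:ℝ) := by exact_mod_cast hM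
  have hMpos : (0:ℝ) < M := by linarith
  have hrhs : 0 ≤ (1 + 1 / (-(a + 1))) * (M : ℝ) ^ (a + 1) := by positivity
  apply Real.tsum_le_of_sum_range_le (fun n => Real.rpow_nonneg (Nat.cast_nonneg _) a)
  intro n
  rcases n with _ | m
  · simpa using hrhs
  rw [Finset.sum_range_succ']
  set g : ℕ → ℝ := fun i => ((i + M : ℕ) : ℝ) ^ (a + 1) with hg
  have hstep : ∀ i : ℕ, ((i + 1 + M : ℕ) : ℝ) ^ a ≤ (g i - g (i + 1)) / (-(a + 1)) := by
    intro i
    have hx : (1:ℝ) ≤ ((i + M : ℕ) : ℝ) := by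
      have h' : (1:ℕ) ≤ i + M := by omega
      exact_mod_cast h'
    have hb := bern_neg hq hx
    rw [show -(-(a + 1)) = a + 1 by ring] at hb
    rw [show a + 1 - 1 = a by ring] at hb
    have hcast : ((i + M : ℕ) : ℝ) + 1 = ((i + 1 + M : ℕ) : ℝ) := by push_cast; ring
    rw [hcast] at hb
    rw [le_div_iff₀ hq, mul_comm]
    have e1 : g i = ((i + M : ℕ) : ℝ) ^ (a + 1) := rfl
    have e2 : g (i + 1) = ((i + 1 + M : ℕ) : ℝ) ^ (a + 1) := rfl
    linarith [hb]
  have h0 : ((0 + M : ℕ) : ℝ) ^ a ≤ (M : ℝ) ^ (a + 1) := by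
    simp only [Nat.zero_add]
    exact Real.rpow_le_rpow_of_exponent_le hM0 (by linarith)
  calc
    ∑ i ∈ Finset.range m, ((i + 1 + M : ℕ) : ℝ) ^ a + ((0 + M : ℕ) : ℝ) ^ a
        ≤ ∑ i ∈ Finset.range m, (g i - g (i + 1)) / (-(a + 1)) + (M : ℝ) ^ (a + 1) :=
      add_le_add (Finset.sum_le_sum fun i _ => hstep i) h0
    _ = (g 0 - g m) / (-(a + 1)) + (M : ℝ) ^ (a + 1) := by
      rw [← Finset.sum_div, Finset.sum_range_sub' g]
    _ ≤ g 0 / (-(a + 1)) + (M : ℝ) ^ (a + 1) := by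
      have hgm : 0 ≤ g m := Real.rpow_nonneg (Nat.cast_nonneg _) _
      have h5 : (g 0 - g m) / (-(a + 1)) ≤ g 0 / (-(a + 1)) :=
        (div_le_div_iff_of_pos_right hq).mpr (by linarith)
      linarith [h5]
    _ = (1 + 1 / (-(a + 1))) * (M : ℝ) ^ (a + 1) := by
      have : g 0 = (M : ℝ) ^ (a + 1) := by simp [hg]
      rw [this]
      field_simp
      ring

/-- Head estimate: `∑_{i=1}^{k} i^(d-1) ≤ k^d / d` for `0 < d ≤ 1`. -/
private lemma head_sum {d : ℝ} (hd0 : 0 < d) (hd1 : d ≤ 1) (k : ℕ) :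
    ∑ i ∈ Finset.range k, ((i + 1 : ℕ) : ℝ) ^ (d - 1) ≤ (k : ℝ) ^ d / d := by
  set g : ℕ → ℝ := fun i => ((i : ℕ) : ℝ) ^ d with hg
  have key : ∀ i : ℕ, ((i + 1 : ℕ) : ℝ) ^ (d - 1) ≤ (g (i + 1) - g i) / d := by
    intro i
    set x : ℝ := ((i + 1 : ℕ) : ℝ) with hxdef
    have hx1 : (1:ℝ) ≤ x := by
      simp only [hxdef]; exact_mod_cast Nat.succ_le_succ (Nat.zero_le i)
    have hx0 : (0:ℝ) < x := lt_of_lt_of_le one_pos hx1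
    have hcast : ((i : ℕ) : ℝ) = x - 1 := by simp only [hxdef]; push_cast; ring
    have hs : (-1 : ℝ) ≤ -(1 / x) := by
      have : 1 / x ≤ 1 := by
        rw [div_le_one hx0]; exact hx1
      linarith
    have hb := rpow_one_add_le_one_add_mul_self hs hd0.le hd1
    have h1 : (1 : ℝ) + -(1 / x) = (x - 1) / x := by field_simp; ring
    rw [h1] at hb
    rw [Real.div_rpow (by linarith : (0:ℝ) ≤ x - 1) hx0.le] at hb
    have hXd : (0:ℝ) < x ^ d := Real.rpow_pos_of_pos hx0 d
    have key2 : (x - 1) ^ d ≤ (1 + d * -(1 / x)) * x ^ d := (div_le_iff₀ hXd).mp hb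
    have h4 : x ^ d / x = x ^ (d - 1) := by
      rw [Real.rpow_sub hx0, Real.rpow_one]
    have h3 : (1 + d * -(1 / x)) * x ^ d = x ^ d - d * x ^ (d - 1) := by
      rw [← h4]; field_simp; ring
    rw [h3] at key2
    have e1 : g (i + 1) = x ^ d := rfl
    have e2 : g i = (x - 1) ^ d := by rw [hg]; simp only []; rw [hcast]
    rw [le_div_iff₀ hd0, mul_comm, e1, e2]
    linarith
  calc
    ∑ i ∈ Finset.range k, ((i + 1 : ℕ) : ℝ) ^ (d - 1)
        ≤ ∑ i ∈ Finset.range k, (g (i + 1) - g i) / d := Finset.sum_le_sum fun i _ => key i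
    _ = (g k - g 0) / d := by rw [← Finset.sum_div, Finset.sum_range_sub g]
    _ = (k : ℝ) ^ d / d := by
      have : g 0 = 0 := by simp [hg, Real.zero_rpow hd0.ne']
      rw [this, sub_zero]

/-- Cross-correlation bound: `∑_m ψ_m ψ_{m+k} ≤ A k^(2d-1)`, with summability. -/
private lemma crosscorr {d C : ℝ} (hd0 : 0 < d) (hd : d < 1 / 4) {psi : ℕ → ℝ}
    (hpos : ∀ l, 0 ≤ psi l) (h0 : psi 0 ≤ C)
    (hbound : ∀ l : ℕ, 1 ≤ l → psi l ≤ C * (l : ℝ) ^ (d - 1)) {k : ℕ} (hk : 1 ≤ k) :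
    Summable (fun m => psi m * psi (m + k)) ∧
      ∑' m, psi m * psi (m + k) ≤ (C ^ 2 * (2 + 1 / d + 1 / (1 - 2 * d))) * (k : ℝ) ^ (2 * d - 1) := by
  have hC : 0 ≤ C := le_trans (hpos 0) h0
  have hk0 : (0:ℝ) < (k:ℝ) := by exact_mod_cast hk
  have hk1 : (1:ℝ) ≤ (k:ℝ) := by exact_mod_cast hk
  -- pointwise bound for positive indices
  have hptwise : ∀ m : ℕ, 1 ≤ m → psi m * psi (m + k) ≤ C ^ 2 * ((m : ℝ)) ^ (2 * d - 2) := by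
    intro m hm
    have hm0 : (0:ℝ) < (m:ℝ) := by exact_mod_cast hm
    have h1 : psi m ≤ C * (m : ℝ) ^ (d - 1) := hbound m hm
    have h2 : psi (m + k) ≤ C * ((m + k : ℕ) : ℝ) ^ (d - 1) := hbound _ (le_trans hm (Nat.le_add_right m k))
    have h3 : ((m + k : ℕ) : ℝ) ^ (d - 1) ≤ (m : ℝ) ^ (d - 1) := by
      apply Real.rpow_le_rpow_of_nonpos hm0 ?_ (by linarith)
      push_cast; linarith [Nat.cast_nonneg (α := ℝ) k]
    have h4 : psi (m + k) ≤ C * (m : ℝ) ^ (d - 1) := h2.trans (by nlinarith [Real.rpow_nonneg hm0.le (d-1)])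
    have h5 : psi m * psi (m + k) ≤ (C * (m : ℝ) ^ (d - 1)) * (C * (m : ℝ) ^ (d - 1)) :=
      mul_le_mul h1 h4 (hpos _) (by positivity)
    have h6 : (m : ℝ) ^ (d - 1) * (m : ℝ) ^ (d - 1) = (m : ℝ) ^ (2 * d - 2) := by
      rw [← Real.rpow_add hm0]; ring_nf
    nlinarith [h5, h6]
  -- summability
  have hsum_rpow : Summable (fun j : ℕ => ((j : ℕ) : ℝ) ^ (2 * d - 2)) :=
    Real.summable_nat_rpow.mpr (by linarith)
  have hsum_dom : Summable (fun j : ℕ => C ^ 2 * (((j + 1 : ℕ)) : ℝ) ^ (2 * d - 2)) :=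
    ((summable_nat_add_iff (f := fun j : ℕ => ((j : ℕ) : ℝ) ^ (2 * d - 2)) 1).mpr hsum_rpow).mul_left _
  have hsum : Summable (fun m => psi m * psi (m + k)) := by
    apply (summable_nat_add_iff (f := fun m => psi m * psi (m + k)) 1).mp
    apply Summable.of_nonneg_of_le (fun j => mul_nonneg (hpos _) (hpos _)) ?_ hsum_dom
    intro j
    exact hptwise (j + 1) (Nat.le_add_left 1 j)
  refine ⟨hsum, ?_⟩
  rw [← Summable.sum_add_tsum_nat_add (k + 1) hsum]
  have hpow : (k : ℝ) ^ (d - 1) * (k : ℝ) ^ d = (k : ℝ) ^ (2 * d - 1) := by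
    rw [← Real.rpow_add hk0]; ring_nf
  -- finite part
  have hfin : ∑ i ∈ Finset.range (k + 1), psi i * psi (i + k)
      ≤ C ^ 2 * (1 + 1 / d) * (k : ℝ) ^ (2 * d - 1) := by
    rw [Finset.sum_range_succ']
    have hterm0 : psi 0 * psi (0 + k) ≤ C ^ 2 * (k : ℝ) ^ (2 * d - 1) := by
      have h1 : psi (0 + k) ≤ C * (k : ℝ) ^ (d - 1) := by
        simpa using hbound k hk
      have h2 : (k : ℝ) ^ (d - 1) ≤ (k : ℝ) ^ (2 * d - 1) :=
        Real.rpow_le_rpow_of_exponent_le hk1 (by linarith)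
      have := mul_le_mul h0 h1 (hpos _) hC
      nlinarith [Real.rpow_nonneg hk0.le (d - 1)]
    have hterms : ∀ i ∈ Finset.range k,
        psi (i + 1) * psi (i + 1 + k) ≤ (C ^ 2 * (k : ℝ) ^ (d - 1)) * ((i + 1 : ℕ) : ℝ) ^ (d - 1) := by
      intro i _
      have hm0 : (0:ℝ) < ((i + 1 : ℕ) : ℝ) := by positivity
      have h1 : psi (i + 1) ≤ C * ((i + 1 : ℕ) : ℝ) ^ (d - 1) := hbound _ (Nat.le_add_left 1 i)
      have h2 : psi (i + 1 + k) ≤ C * ((i + 1 + k : ℕ) : ℝ) ^ (d - 1) :=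
        hbound _ (by omega)
      have h3 : ((i + 1 + k : ℕ) : ℝ) ^ (d - 1) ≤ (k : ℝ) ^ (d - 1) := by
        apply Real.rpow_le_rpow_of_nonpos hk0 ?_ (by linarith)
        push_cast; linarith [Nat.cast_nonneg (α := ℝ) i]
      have h4 : psi (i + 1 + k) ≤ C * (k : ℝ) ^ (d - 1) :=
        h2.trans (by nlinarith [Real.rpow_nonneg hk0.le (d - 1)])
      have h5 := mul_le_mul h1 h4 (hpos _) (by positivity)
      nlinarith [h5]
    calc
      ∑ i ∈ Finset.range k, psi (i + 1) * psi (i + 1 + k) + psi 0 * psi (0 + k)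
          ≤ ∑ i ∈ Finset.range k, (C ^ 2 * (k : ℝ) ^ (d - 1)) * ((i + 1 : ℕ) : ℝ) ^ (d - 1)
            + C ^ 2 * (k : ℝ) ^ (2 * d - 1) :=
        add_le_add (Finset.sum_le_sum hterms) hterm0
      _ = (C ^ 2 * (k : ℝ) ^ (d - 1)) * (∑ i ∈ Finset.range k, ((i + 1 : ℕ) : ℝ) ^ (d - 1))
            + C ^ 2 * (k : ℝ) ^ (2 * d - 1) := by rw [← Finset.mul_sum]
      _ ≤ (C ^ 2 * (k : ℝ) ^ (d - 1)) * ((k : ℝ) ^ d / d) + C ^ 2 * (k : ℝ) ^ (2 * d - 1) := by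
        have := head_sum hd0 (by linarith) k
        have hnn : 0 ≤ C ^ 2 * (k : ℝ) ^ (d - 1) := by positivity
        nlinarith [this, hnn]
      _ = C ^ 2 * (1 + 1 / d) * (k : ℝ) ^ (2 * d - 1) := by
        rw [← hpow]; field_simp; ring
  -- tail part
  have htail : ∑' j, psi (j + (k + 1)) * psi (j + (k + 1) + k)
      ≤ C ^ 2 * (1 + 1 / (1 - 2 * d)) * (k : ℝ) ^ (2 * d - 1) := by
    have hsum_shift : Summable (fun j : ℕ => psi (j + (k + 1)) * psi (j + (k + 1) + k)) :=
      (summable_nat_add_iff (f := fun m => psi m * psi (m + k)) (k + 1)).mpr hsum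
    have hsum_dom2 : Summable (fun j : ℕ => C ^ 2 * (((j + (k + 1) : ℕ)) : ℝ) ^ (2 * d - 2)) :=
      ((summable_nat_add_iff (f := fun j : ℕ => ((j : ℕ) : ℝ) ^ (2 * d - 2)) (k + 1)).mpr hsum_rpow).mul_left _
    have hle : ∀ j : ℕ, psi (j + (k + 1)) * psi (j + (k + 1) + k)
        ≤ C ^ 2 * (((j + (k + 1) : ℕ)) : ℝ) ^ (2 * d - 2) := by
      intro j; exact hptwise _ (by omega)
    calc
      ∑' j, psi (j + (k + 1)) * psi (j + (k + 1) + k)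
          ≤ ∑' j : ℕ, C ^ 2 * (((j + (k + 1) : ℕ)) : ℝ) ^ (2 * d - 2) :=
        Summable.tsum_le_tsum hle hsum_shift hsum_dom2
      _ = C ^ 2 * ∑' j : ℕ, (((j + (k + 1) : ℕ)) : ℝ) ^ (2 * d - 2) := tsum_mul_left
      _ ≤ C ^ 2 * ((1 + 1 / (1 - 2 * d)) * ((k + 1 : ℕ) : ℝ) ^ (2 * d - 1)) := by
        have htt := tail_sum (a := 2 * d - 2) (by linarith) (M := k + 1) (by omega)
        rw [show -(2 * d - 2 + 1) = 1 - 2 * d by ring, show (2 * d - 2 + 1) = 2 * d - 1 by ring] at htt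
        have hcc : 0 ≤ C ^ 2 := sq_nonneg C
        exact mul_le_mul_of_nonneg_left htt hcc
      _ ≤ C ^ 2 * ((1 + 1 / (1 - 2 * d)) * (k : ℝ) ^ (2 * d - 1)) := by
        have h1 : ((k + 1 : ℕ) : ℝ) ^ (2 * d - 1) ≤ (k : ℝ) ^ (2 * d - 1) := by
          apply Real.rpow_le_rpow_of_nonpos hk0 ?_ (by linarith)
          push_cast; linarith
        have h2 : (0:ℝ) ≤ 1 + 1 / (1 - 2 * d) := by
          have : (0:ℝ) < 1 - 2 * d := by linarith
          positivity
        have hcc : 0 ≤ C ^ 2 := sq_nonneg C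
        exact mul_le_mul_of_nonneg_left (mul_le_mul_of_nonneg_left h1 h2) hcc
      _ = C ^ 2 * (1 + 1 / (1 - 2 * d)) * (k : ℝ) ^ (2 * d - 1) := by ring
  have h1d : (0:ℝ) < 1 / d := by positivity
  have h12d : (0:ℝ) < 1 - 2 * d := by linarith
  nlinarith [hfin, htail, Real.rpow_nonneg hk0.le (2 * d - 1), sq_nonneg C]

/-- Parametrization of the constrained index set. -/
private def Phi (N : ℕ) : Bool × ℕ × ℕ × ℕ → ℕ × ℕ × ℕ × ℕ
  | (true, j, m, n) => (m + (N + j), m, n, n + (N + j))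
  | (false, j, m, n) => (m, m + (N + j), n + (N + j), n)

private lemma Phi_inj {N : ℕ} (hN : 2 ≤ N) : Function.Injective (Phi N) := by
  rintro ⟨s, j, m, n⟩ ⟨s', j', m', n'⟩ h
  cases s <;> cases s' <;> simp only [Phi, Prod.mk.injEq] at h <;>
      obtain ⟨h1, h2, h3, h4⟩ := h
  · simp only [Prod.mk.injEq]; exact ⟨trivial, by omega, by omega, by omega⟩
  · exact absurd h1 (by omega)
  · exact absurd h1 (by omega)
  · simp only [Prod.mk.injEq]; exact ⟨trivial, by omega, by omega, by omega⟩

private def Fq (N : ℕ) (psi : ℕ → ℝ) (q : ℕ × ℕ × ℕ × ℕ) : ℝ :=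
  if (N : ℤ) ≤ |(q.1 : ℤ) - q.2.1| ∧ (N : ℤ) ≤ |(q.2.2.1 : ℤ) - q.2.2.2| ∧
      (q.1 : ℤ) - q.2.1 + q.2.2.1 - q.2.2.2 = 0 then
    psi q.1 * psi q.2.1 * psi q.2.2.1 * psi q.2.2.2 else 0

private lemma Fq_nonneg (N : ℕ) (psi : ℕ → ℝ) (hpos : ∀ l, 0 ≤ psi l) (q : ℕ × ℕ × ℕ × ℕ) :
    0 ≤ Fq N psi q := by
  rw [Fq]
  split
  · have := hpos q.1; have := hpos q.2.1; have := hpos q.2.2.1; have := hpos q.2.2.2; positivity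
  · exact le_refl 0

private lemma Fq_supp {N : ℕ} {psi : ℕ → ℝ} :
    Function.support (fun q => ENNReal.ofReal (Fq N psi q)) ⊆ Set.range (Phi N) := by
  rintro ⟨l, m, n, o⟩ hq
  simp only [Function.mem_support] at hq
  have hF : Fq N psi (l, m, n, o) ≠ 0 := by
    intro h; apply hq; rw [h]; simp
  rw [Fq] at hF
  by_cases hc : (N : ℤ) ≤ |(l : ℤ) - m| ∧ (N : ℤ) ≤ |(n : ℤ) - o| ∧
      (l : ℤ) - m + n - o = 0
  swap
  · exact absurd (if_neg hc) hF
  obtain ⟨h1, h2, h3⟩ := hc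
  rcases abs_cases ((l : ℤ) - (m : ℤ)) with ⟨he, _⟩ | ⟨he, _⟩
  · rw [he] at h1
    refine ⟨(true, l - m - N, m, n), ?_⟩
    simp only [Phi, Prod.mk.injEq]
    refine ⟨?_, trivial, trivial, ?_⟩ <;> omega
  · rw [he] at h1
    refine ⟨(false, m - l - N, l, o), ?_⟩
    simp only [Phi, Prod.mk.injEq]
    refine ⟨trivial, ?_, ?_, trivial⟩ <;> omega

private lemma Fq_Phi_true {N : ℕ} (hN : 2 ≤ N) (psi : ℕ → ℝ) (j m n : ℕ) :
    Fq N psi (Phi N (true, j, m, n)) = (psi m * psi (m + (N + j))) * (psi n * psi (n + (N + j))) := by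
  simp only [Phi, Fq]
  refine (if_pos ?_).trans ?_
  rotate_left
  · ring
  · have e1 : ((m + (N + j) : ℕ) : ℤ) - (m : ℤ) = ((N : ℤ) + j) := by push_cast; ring
    have e2 : ((n : ℕ) : ℤ) - ((n + (N + j) : ℕ) : ℤ) = -((N : ℤ) + j) := by push_cast; ring
    refine ⟨?_, ?_, ?_⟩
    · rw [e1, abs_of_nonneg (by positivity)]; omega
    · rw [e2, abs_neg, abs_of_nonneg (by positivity)]; omega
    · push_cast; ring

private lemma Fq_Phi_false {N : ℕ} (hN : 2 ≤ N) (psi : ℕ → ℝ) (j m n : ℕ) :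
    Fq N psi (Phi N (false, j, m, n)) = (psi m * psi (m + (N + j))) * (psi n * psi (n + (N + j))) := by
  simp only [Phi, Fq]
  refine (if_pos ?_).trans ?_
  rotate_left
  · ring
  · have e1 : ((m : ℕ) : ℤ) - ((m + (N + j) : ℕ) : ℤ) = -((N : ℤ) + j) := by push_cast; ring
    have e2 : ((n + (N + j) : ℕ) : ℤ) - (n : ℤ) = ((N : ℤ) + j) := by push_cast; ring
    refine ⟨?_, ?_, ?_⟩
    · rw [e1, abs_neg, abs_of_nonneg (by positivity)]; omega
    · rw [e2, abs_of_nonneg (by positivity)]; omega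
    · push_cast; ring

theorem tail_fourfold_sum_bound (d C : ℝ) (hd0 : 0 < d) (hd : d < 1 / 4)
    (psi : ℕ → ℝ) (hpos : ∀ l, 0 ≤ psi l) (h0 : psi 0 ≤ C)
    (hbound : ∀ l : ℕ, 1 ≤ l → psi l ≤ C * (l : ℝ) ^ (d - 1)) :
    ∃ C' : ℝ, 0 < C' ∧ ∀ N : ℕ, 2 ≤ N →
      (∑' q : ℕ × ℕ × ℕ × ℕ,
          if (N : ℤ) ≤ |(q.1 : ℤ) - q.2.1| ∧ (N : ℤ) ≤ |(q.2.2.1 : ℤ) - q.2.2.2| ∧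
              (q.1 : ℤ) - q.2.1 + q.2.2.1 - q.2.2.2 = 0 then
            psi q.1 * psi q.2.1 * psi q.2.2.1 * psi q.2.2.2 else 0)
        ≤ C' * (N : ℝ) ^ (4 * d - 1) := by
  have hC : 0 ≤ C := le_trans (hpos 0) h0
  set A : ℝ := C ^ 2 * (2 + 1 / d + 1 / (1 - 2 * d)) with hA
  have h12d : (0:ℝ) < 1 - 2 * d := by linarith
  have h14d : (0:ℝ) < 1 - 4 * d := by linarith
  have hA0 : 0 ≤ A := by
    have h1 : (0:ℝ) < 1 / d := by positivity
    have h2 : (0:ℝ) < 1 / (1 - 2 * d) := by positivity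
    nlinarith [sq_nonneg C]
  set c2 : ℝ := 1 + 1 / (1 - 4 * d) with hc2
  have hc20 : 0 < c2 := by positivity
  refine ⟨2 * (A ^ 2 * c2) + 1, by positivity, ?_⟩
  intro N hN
  have hN1 : (1:ℝ) ≤ (N:ℝ) := by exact_mod_cast (by omega : 1 ≤ N)
  have hN0 : (0:ℝ) < (N:ℝ) := by linarith
  have hrpowN : (0:ℝ) ≤ (N : ℝ) ^ (4 * d - 1) := Real.rpow_nonneg hN0.le _
  change (∑' q : ℕ × ℕ × ℕ × ℕ, Fq N psi q) ≤ _
  have hF0 : ∀ q, 0 ≤ Fq N psi q := Fq_nonneg N psi hpos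
  -- the ENNReal-valued computation
  set G : ℕ → ENNReal := fun k => ∑' m, ENNReal.ofReal (psi m * psi (m + k)) with hG
  have hGle : ∀ k : ℕ, 1 ≤ k → G k ≤ ENNReal.ofReal (A * (k : ℝ) ^ (2 * d - 1)) := by
    intro k hk
    obtain ⟨hsum, hbnd⟩ := crosscorr hd0 hd hpos h0 hbound hk
    rw [hG]
    simp only []
    rw [← ENNReal.ofReal_tsum_of_nonneg (fun m => mul_nonneg (hpos _) (hpos _)) hsum]
    exact ENNReal.ofReal_le_ofReal hbnd
  have key : (∑' q : ℕ × ℕ × ℕ × ℕ, ENNReal.ofReal (Fq N psi q))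
      ≤ ENNReal.ofReal ((2 * (A ^ 2 * c2) + 1) * (N : ℝ) ^ (4 * d - 1)) := by
    have hreindex : (∑' q : ℕ × ℕ × ℕ × ℕ, ENNReal.ofReal (Fq N psi q))
        = ∑' p : Bool × ℕ × ℕ × ℕ, ENNReal.ofReal (Fq N psi (Phi N p)) :=
      ((Phi_inj hN).tsum_eq Fq_supp).symm
    rw [hreindex]
    have hval : ∀ p : Bool × ℕ × ℕ × ℕ, ENNReal.ofReal (Fq N psi (Phi N p))
        = ENNReal.ofReal (psi p.2.2.1 * psi (p.2.2.1 + (N + p.2.1)))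
          * ENNReal.ofReal (psi p.2.2.2 * psi (p.2.2.2 + (N + p.2.1))) := by
      rintro ⟨s, j, m, n⟩
      have hmul : ∀ m n : ℕ, ENNReal.ofReal ((psi m * psi (m + (N + j))) * (psi n * psi (n + (N + j))))
          = ENNReal.ofReal (psi m * psi (m + (N + j))) * ENNReal.ofReal (psi n * psi (n + (N + j))) :=
        fun m n => ENNReal.ofReal_mul (mul_nonneg (hpos _) (hpos _))
      cases s
      · rw [Fq_Phi_false hN psi j m n, hmul]
      · rw [Fq_Phi_true hN psi j m n, hmul]
    calc
      (∑' p : Bool × ℕ × ℕ × ℕ, ENNReal.ofReal (Fq N psi (Phi N p)))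
          = ∑' p : Bool × ℕ × ℕ × ℕ,
              ENNReal.ofReal (psi p.2.2.1 * psi (p.2.2.1 + (N + p.2.1)))
                * ENNReal.ofReal (psi p.2.2.2 * psi (p.2.2.2 + (N + p.2.1))) :=
        tsum_congr hval
      _ = ∑' s : Bool, ∑' j : ℕ, ∑' m : ℕ, ∑' n : ℕ,
              ENNReal.ofReal (psi m * psi (m + (N + j)))
                * ENNReal.ofReal (psi n * psi (n + (N + j))) := by
        rw [ENNReal.tsum_prod']
        congr 1; funext s
        rw [ENNReal.tsum_prod']
        congr 1; funext j
        rw [ENNReal.tsum_prod']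
      _ = ∑' s : Bool, ∑' j : ℕ, G (N + j) * G (N + j) := by
        congr 1; funext s; congr 1; funext j
        rw [hG]
        simp only []
        rw [← ENNReal.tsum_mul_right]
        congr 1; funext m
        rw [← ENNReal.tsum_mul_left]
      _ = (∑' j : ℕ, G (N + j) * G (N + j)) + (∑' j : ℕ, G (N + j) * G (N + j)) := by
        rw [tsum_bool]
      _ ≤ ENNReal.ofReal ((A ^ 2 * c2) * (N : ℝ) ^ (4 * d - 1))
            + ENNReal.ofReal ((A ^ 2 * c2) * (N : ℝ) ^ (4 * d - 1)) := by
        have hone : ∀ j : ℕ, G (N + j) * G (N + j)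
            ≤ ENNReal.ofReal (A ^ 2 * ((N + j : ℕ) : ℝ) ^ (4 * d - 2)) := by
          intro j
          have hk : 1 ≤ N + j := by omega
          have hkR : (0:ℝ) < ((N + j : ℕ) : ℝ) := by exact_mod_cast hk
          have h1 := hGle (N + j) hk
          have h2 : ENNReal.ofReal (A * ((N + j : ℕ) : ℝ) ^ (2 * d - 1))
              * ENNReal.ofReal (A * ((N + j : ℕ) : ℝ) ^ (2 * d - 1))
              = ENNReal.ofReal (A ^ 2 * ((N + j : ℕ) : ℝ) ^ (4 * d - 2)) := by
            rw [← ENNReal.ofReal_mul (by positivity)]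
            congr 1
            have : ((N + j : ℕ) : ℝ) ^ (2 * d - 1) * ((N + j : ℕ) : ℝ) ^ (2 * d - 1)
                = ((N + j : ℕ) : ℝ) ^ (4 * d - 2) := by
              rw [← Real.rpow_add hkR]; ring_nf
            nlinarith [this]
          rw [← h2]
          exact mul_le_mul' h1 h1
        have htsum : (∑' j : ℕ, G (N + j) * G (N + j))
            ≤ ENNReal.ofReal ((A ^ 2 * c2) * (N : ℝ) ^ (4 * d - 1)) := by
          calc
            (∑' j : ℕ, G (N + j) * G (N + j))
                ≤ ∑' j : ℕ, ENNReal.ofReal (A ^ 2 * ((N + j : ℕ) : ℝ) ^ (4 * d - 2)) :=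
              ENNReal.tsum_le_tsum hone
            _ = ENNReal.ofReal (∑' j : ℕ, A ^ 2 * ((N + j : ℕ) : ℝ) ^ (4 * d - 2)) := by
              rw [ENNReal.ofReal_tsum_of_nonneg]
              · intro j; positivity
              · apply Summable.mul_left
                have : Summable (fun j : ℕ => ((j : ℕ) : ℝ) ^ (4 * d - 2)) :=
                  Real.summable_nat_rpow.mpr (by linarith)
                have h := (summable_nat_add_iff (f := fun j : ℕ => ((j : ℕ) : ℝ) ^ (4 * d - 2)) N).mpr this
                apply h.congr
                intro j
                congr 1
                push_cast
                ring
            _ ≤ ENNReal.ofReal ((A ^ 2 * c2) * (N : ℝ) ^ (4 * d - 1)) := by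
              apply ENNReal.ofReal_le_ofReal
              have htt := tail_sum (a := 4 * d - 2) (by linarith) (M := N) (by omega)
              rw [show -(4 * d - 2 + 1) = 1 - 4 * d by ring,
                show (4 * d - 2 + 1) = 4 * d - 1 by ring] at htt
              have heq : (∑' j : ℕ, A ^ 2 * ((N + j : ℕ) : ℝ) ^ (4 * d - 2))
                  = A ^ 2 * ∑' j : ℕ, ((j + N : ℕ) : ℝ) ^ (4 * d - 2) := by
                rw [← tsum_mul_left]
                apply tsum_congr
                intro j
                rw [Nat.add_comm N j]
              rw [heq, hc2]
              have hAsq : (0:ℝ) ≤ A ^ 2 := sq_nonneg A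
              calc A ^ 2 * ∑' j : ℕ, ((j + N : ℕ) : ℝ) ^ (4 * d - 2)
                  ≤ A ^ 2 * ((1 + 1 / (1 - 4 * d)) * (N : ℝ) ^ (4 * d - 1)) :=
                mul_le_mul_of_nonneg_left htt hAsq
                _ = A ^ 2 * (1 + 1 / (1 - 4 * d)) * (N : ℝ) ^ (4 * d - 1) := by ring
        exact add_le_add htsum htsum
      _ = ENNReal.ofReal (2 * (A ^ 2 * c2) * (N : ℝ) ^ (4 * d - 1)) := by
        rw [← ENNReal.ofReal_add (by positivity) (by positivity)]
        congr 1
        ring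
      _ ≤ ENNReal.ofReal ((2 * (A ^ 2 * c2) + 1) * (N : ℝ) ^ (4 * d - 1)) := by
        apply ENNReal.ofReal_le_ofReal
        nlinarith [hrpowN]
  -- transfer back to ℝ
  have hfin : (∑' q : ℕ × ℕ × ℕ × ℕ, ENNReal.ofReal (Fq N psi q)) ≠ ⊤ :=
    ne_top_of_le_ne_top ENNReal.ofReal_ne_top key
  have hsummF : Summable (Fq N psi) := by
    have h := ENNReal.summable_toReal hfin
    apply h.congr
    intro q
    exact ENNReal.toReal_ofReal (hF0 q)
  have hmain : ENNReal.ofReal (∑' q : ℕ × ℕ × ℕ × ℕ, Fq N psi q)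
      ≤ ENNReal.ofReal ((2 * (A ^ 2 * c2) + 1) * (N : ℝ) ^ (4 * d - 1)) := by
    rw [ENNReal.ofReal_tsum_of_nonneg hF0 hsummF]
    exact key
  exact (ENNReal.ofReal_le_ofReal_iff (by positivity)).mp hmain
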